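/- Suppose a group G admits a presentation with n generators and the relations identify each generator g_i with its image under an endomorphism induced by φ, i.e., G = ⟨x₁,…,x_n | x_i = w_i(x₁,…,x_n), i = 1,…,n⟩ where x_i ↦ w_i defines an endomorphism Φ of the free group F_n. If G is free of rank n, then Φ is an automorphism of F_n whose induced map on G is the identity. -/

import Mathlib

namespace MonodromyAux

variable {α : Type*} [DecidableEq α]

/-- No cancelling adjacent pair (in the weak form: adjacent letters with the same
generator have the same sign). -/
def Red2 (M : List (α × Bool)) : Prop :=
  ∀ (j : ℕ) (a : α) (b c : Bool), M[j]? = some (a, b) → M[j+1]? = some (a, c) → b = c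

def P (M : List (α × Bool)) (a : α) (j : ℕ) : Prop :=
  M[j]? = some (a, true) ∨ (0 < j ∧ M[j-1]? = some (a, false))

def Q (M : List (α × Bool)) (a : α) (j : ℕ) : Prop :=
  (0 < j ∧ M[j-1]? = some (a, true)) ∨ M[j]? = some (a, false)

instance (M : List (α × Bool)) (a : α) : DecidablePred (P M a) := fun _ => by
  unfold P; infer_instance

instance (M : List (α × Bool)) (a : α) : DecidablePred (Q M a) := fun _ => by
  unfold Q; infer_instance

variable (M : List (α × Bool))

noncomputable def eqvPQ (h : Red2 M) (a : α) :
    {j : Fin (M.length + 1) // P M a j.val} ≃ {j : Fin (M.length + 1) // Q M a j.val} where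
  toFun := fun ⟨j, hj⟩ =>
    if h1 : M[(j : ℕ)]? = some (a, true) then
      ⟨⟨(j : ℕ) + 1, by
          have := (List.getElem?_eq_some_iff.mp h1).1; omega⟩,
        Or.inl ⟨Nat.succ_pos _, by simpa using h1⟩⟩
    else
      ⟨⟨(j : ℕ) - 1, by omega⟩, by
        rcases hj with h2 | ⟨h2, h3⟩
        · exact absurd h2 h1
        · exact Or.inr h3⟩
  invFun := fun ⟨j, hj⟩ =>
    if h1 : 0 < (j : ℕ) ∧ M[(j : ℕ)-1]? = some (a, true) then
      ⟨⟨(j : ℕ) - 1, by omega⟩, Or.inl h1.2⟩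
    else
      ⟨⟨(j : ℕ) + 1, by
          rcases hj with ⟨h2, h3⟩ | h2
        
          · exact absurd ⟨h2, h3⟩ h1
          · have := (List.getElem?_eq_some_iff.mp h2).1; omega⟩,
        by
          rcases hj with ⟨h2, h3⟩ | h2
          · exact absurd ⟨h2, h3⟩ h1
          · exact Or.inr ⟨Nat.succ_pos _, by simpa using h2⟩⟩
  left_inv := by
    rintro ⟨j, hj⟩
    by_cases h1 : M[(j : ℕ)]? = some (a, true)
    · simp only [dif_pos h1]
      have hc : 0 < (j : ℕ) + 1 ∧ M[(j : ℕ) + 1 - 1]? = some (a, true) :=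
        ⟨Nat.succ_pos _, by simpa using h1⟩
      simp only [dif_pos hc]
      apply Subtype.ext; apply Fin.ext; simp
    · have hj2 : 0 < (j : ℕ) ∧ M[(j : ℕ)-1]? = some (a, false) := by
        rcases hj with h2 | h2
        · exact absurd h2 h1
        · exact h2
      simp only [dif_neg h1]
      have hc : ¬ (0 < (j : ℕ) - 1 ∧ M[(j : ℕ) - 1 - 1]? = some (a, true)) := by
        rintro ⟨h2, h3⟩
        have := h ((j : ℕ) - 1 - 1) a true false h3 (by
          have : (j : ℕ) - 1 - 1 + 1 = (j : ℕ) - 1 := by omega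
          rw [this]; exact hj2.2)
        simp at this
      simp only [dif_neg hc]
      apply Subtype.ext; apply Fin.ext; simp; omega
  right_inv := by
    rintro ⟨j, hj⟩
    by_cases h1 : 0 < (j : ℕ) ∧ M[(j : ℕ)-1]? = some (a, true)
    · simp only [dif_pos h1]
      simp only [dif_pos h1.2]
      apply Subtype.ext; apply Fin.ext; simp; omega
    · have hj2 : M[(j : ℕ)]? = some (a, false) := by
        rcases hj with h2 | h2
        · exact absurd h2 h1
        · exact h2
      simp only [dif_neg h1]
      have hc : ¬ (M[(j : ℕ) + 1]? = some (a, true)) := by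
        intro h2
        have := h (j : ℕ) a false true hj2 h2
        simp at this
      simp only [dif_neg hc]
      apply Subtype.ext; apply Fin.ext; simp

lemma card_compl_eq (h : Red2 M) (a : α) :
    Fintype.card {j : Fin (M.length + 1) // ¬ P M a j.val} =
      Fintype.card {j : Fin (M.length + 1) // ¬ Q M a j.val} := by
  rw [Fintype.card_subtype_compl, Fintype.card_subtype_compl,
    Fintype.card_congr (eqvPQ M h a)]

noncomputable def sigma (h : Red2 M) (a : α) : Equiv.Perm (Fin (M.length + 1)) :=
  (Equiv.sumCompl (fun j : Fin (M.length + 1) => P M a j.val)).symm.trans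
    (((eqvPQ M h a).sumCongr (Fintype.equivOfCardEq (card_compl_eq M h a))).trans
      (Equiv.sumCompl (fun j : Fin (M.length + 1) => Q M a j.val)))

lemma sigma_apply_of_P (h : Red2 M) (a : α) (j : Fin (M.length + 1)) (hp : P M a j.val) :
    sigma M h a j = ((eqvPQ M h a) ⟨j, hp⟩).val := by
  unfold sigma
  rw [Equiv.trans_apply, Equiv.trans_apply,
    Equiv.sumCompl_symm_apply_of_pos (p := fun j : Fin (M.length + 1) => P M a j.val) hp]
  rfl

lemma sigma_tt (h : Red2 M) (a : α) (t : ℕ) (ht : M[t]? = some (a, true))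
    (h1 : t < M.length + 1) (h2 : t + 1 < M.length + 1) :
    sigma M h a ⟨t, h1⟩ = ⟨t + 1, h2⟩ := by
  rw [sigma_apply_of_P M h a _ (Or.inl ht)]
  simp only [eqvPQ, Equiv.coe_fn_mk, dif_pos ht]

lemma sigma_ff (h : Red2 M) (a : α) (t : ℕ) (ht : M[t]? = some (a, false))
    (h1 : t < M.length + 1) (h2 : t + 1 < M.length + 1) :
    sigma M h a ⟨t + 1, h2⟩ = ⟨t, h1⟩ := by
  rw [sigma_apply_of_P M h a _ (Or.inr ⟨Nat.succ_pos _, by simpa using ht⟩)]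
  have hc : ¬ (M[t + 1]? = some (a, true)) := by
    intro hx
    have := h t a false true ht hx
    simp at this
  simp only [eqvPQ, Equiv.coe_fn_mk, dif_neg hc]
  apply Fin.ext
  simp

noncomputable def toPerm (h : Red2 M) (x : α × Bool) : Equiv.Perm (Fin (M.length + 1)) :=
  cond x.2 (sigma M h x.1) (sigma M h x.1)⁻¹

lemma traj (h : Red2 M) : ∀ t (ht : t ≤ M.length),
    (((M.take t).reverse.map (toPerm M h)).prod) ⟨0, Nat.succ_pos _⟩ = ⟨t, by omega⟩ := by
  intro t
  induction t with
  | zero => intro _; simp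
  | succ t ih =>
    intro ht
    have htl : t < M.length := by omega
    have hsome : M[t]? = some M[t] := List.getElem?_eq_getElem htl
    rw [List.take_succ, hsome]
    simp only [Option.toList_some, List.reverse_append, List.reverse_cons, List.reverse_nil,
      List.nil_append, List.cons_append, List.map_cons, List.prod_cons, List.nil_append]
    rw [Equiv.Perm.mul_apply, ih (by omega)]
    rcases hx : M[t]'htl with ⟨a, b⟩
    have hsome' : M[t]? = some (a, b) := by rw [hx] at hsome; exact hsome
    cases b
    · show (sigma M h a)⁻¹ ⟨t, _⟩ = ⟨t + 1, _⟩
      have hs := sigma_ff M h a t hsome' (by omega) (by omega)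
      rw [← hs, ← Equiv.Perm.mul_apply, inv_mul_cancel, Equiv.Perm.one_apply]
    · exact sigma_tt M h a t hsome' (by omega) (by omega)

lemma red2_toWord (w : FreeGroup α) : Red2 w.toWord := by
  intro j a b c hj hj1
  by_contra hbc
  obtain ⟨hjl, hje⟩ := List.getElem?_eq_some_iff.mp hj
  obtain ⟨hjl1, hje1⟩ := List.getElem?_eq_some_iff.mp hj1
  have hc : c = !b := by cases b <;> cases c <;> simp_all
  subst hc
  have hd1 : w.toWord.drop j = (a, b) :: (a, !b) :: w.toWord.drop (j + 2) := by
    rw [List.drop_eq_getElem_cons hjl, hje]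
    congr 1
    rw [List.drop_eq_getElem_cons hjl1, hje1]
  have hdecomp : w.toWord = w.toWord.take j ++ (a, b) :: (a, !b) :: w.toWord.drop (j + 2) := by
    rw [← hd1, List.take_append_drop]
  have hred : FreeGroup.reduce w.toWord = w.toWord := FreeGroup.reduce_toWord w
  rw [hdecomp] at hred
  exact FreeGroup.reduce.not hred

lemma red2_reverse {M : List (α × Bool)} (h : Red2 M) : Red2 M.reverse := by
  intro j a b c hj hj1
  obtain ⟨hjl, hje⟩ := List.getElem?_eq_some_iff.mp hj
  obtain ⟨hjl1, hje1⟩ := List.getElem?_eq_some_iff.mp hj1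
  rw [List.length_reverse] at hjl hjl1
  rw [List.getElem_reverse] at hje hje1
  refine (h (M.length - 1 - (j + 1)) a c b (List.getElem?_eq_some_iff.mpr ⟨by omega, hje1⟩)
    ?_).symm
  rw [show M.length - 1 - (j + 1) + 1 = M.length - 1 - j from by omega]
  exact List.getElem?_eq_some_iff.mpr ⟨by omega, hje⟩

lemma exists_sep (w : FreeGroup α) (hw : w ≠ 1) :
    ∃ (G : Type) (_ : Group G) (_ : Finite G) (π : FreeGroup α →* G), π w ≠ 1 := by
  set M := w.toWord.reverse with hM
  have hred : Red2 M := red2_reverse (red2_toWord w)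
  have hlen : M.length ≠ 0 := by
    simp only [hM, List.length_reverse, ne_eq, List.length_eq_zero_iff]
    rw [FreeGroup.toWord_eq_nil_iff]
    exact hw
  refine ⟨Equiv.Perm (Fin (M.length + 1)), inferInstance, inferInstance,
    FreeGroup.lift (fun a => sigma M hred a), ?_⟩
  intro hcontra
  have hval : (FreeGroup.lift (fun a => sigma M hred a)) w ⟨0, Nat.succ_pos _⟩ =
      ⟨M.length, Nat.lt_succ_self _⟩ := by
    conv_lhs => rw [← FreeGroup.mk_toWord (x := w)]
    rw [FreeGroup.lift_mk]
    have hL : w.toWord = (M.take M.length).reverse := by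
      rw [List.take_length, hM, List.reverse_reverse]
    rw [hL]
    have hmap : ((M.take M.length).reverse.map
        (fun x : α × Bool => cond x.2 (sigma M hred x.1) (sigma M hred x.1)⁻¹)) =
        ((M.take M.length).reverse.map (toPerm M hred)) := by
      apply List.map_congr_left
      intro x _
      rfl
    rw [hmap]
    exact traj M hred M.length le_rfl
  rw [hcontra] at hval
  simp only [Equiv.Perm.one_apply] at hval
  have := congrArg Fin.val hval
  simp at this
  exact hlen this.symm

end MonodromyAux

open MonodromyAux in
lemma freeGroup_hopfian (n : ℕ) (f : FreeGroup (Fin n) →* FreeGroup (Fin n))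
    (hf : Function.Surjective f) : Function.Injective f := by
  have hker : ∀ w, f w = 1 → w = 1 := by
    intro w hw
    by_contra hne
    obtain ⟨G, _, _, π, hπ⟩ := exists_sep w hne
    have : Finite (FreeGroup (Fin n) →* G) := Finite.of_equiv _ FreeGroup.lift
    have hinj : Function.Injective (fun ψ : FreeGroup (Fin n) →* G => ψ.comp f) := by
      intro ψ₁ ψ₂ hcomp
      exact (MonoidHom.cancel_right hf).mp hcomp
    obtain ⟨ψ, hψ⟩ := Finite.surjective_of_injective hinj π
    apply hπ
    have := DFunLike.congr_fun hψ w
    simp only [MonoidHom.comp_apply, hw, map_one] at this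
    exact this.symm
  intro x y hxy
  have h1 : f (x * y⁻¹) = 1 := by rw [map_mul, map_inv, hxy, mul_inv_cancel]
  have := hker _ h1
  rwa [mul_inv_eq_one] at this

/-- Suppose `G = ⟨x₁,…,x_n ∣ xᵢ = wᵢ(x₁,…,x_n)⟩`, where `xᵢ ↦ wᵢ` defines an
endomorphism `Φ` of the free group `F_n`; that is, `G` is the quotient of `F_n`
by the normal closure of the elements `xᵢ⁻¹ · Φ(xᵢ)`.  If `G` is free of rank
`n`, then `Φ` is an automorphism of `F_n` and the map induced by `Φ` on `G` is
the identity (i.e. the quotient map coequalizes `Φ` and the identity). -/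
theorem presentation_free_of_rank_n_implies_monodromy_trivial
    (n : ℕ) (Φ : FreeGroup (Fin n) →* FreeGroup (Fin n))
    (N : Subgroup (FreeGroup (Fin n)))
    (hN : N = Subgroup.normalClosure
      (Set.range fun i : Fin n => (FreeGroup.of i)⁻¹ * Φ (FreeGroup.of i)))
    (hNnormal : N.Normal)
    (hfree : Nonempty ((FreeGroup (Fin n) ⧸ N) ≃* FreeGroup (Fin n))) :
    Function.Bijective Φ ∧
      (QuotientGroup.mk' N).comp Φ = QuotientGroup.mk' N := by
  have key : ∀ i : Fin n, (QuotientGroup.mk' N) (Φ (FreeGroup.of i)) =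
      (QuotientGroup.mk' N) (FreeGroup.of i) := by
    intro i
    have hmem : (FreeGroup.of i)⁻¹ * Φ (FreeGroup.of i) ∈ N := by
      rw [hN]
      exact Subgroup.subset_normalClosure ⟨i, rfl⟩
    rw [QuotientGroup.mk'_apply, QuotientGroup.mk'_apply, QuotientGroup.eq]
    exact N.inv_mem_iff.mp (by simpa using hmem)
  have hcomp : (QuotientGroup.mk' N).comp Φ = QuotientGroup.mk' N :=
    FreeGroup.ext_hom _ _ (fun i => by simpa using key i)
  obtain ⟨e⟩ := hfree
  have hsurj : Function.Surjective
      (e.toMonoidHom.comp (QuotientGroup.mk' N)) :=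
    e.surjective.comp (QuotientGroup.mk'_surjective N)
  have hinj2 := freeGroup_hopfian n _ hsurj
  have hinjmk : Function.Injective (QuotientGroup.mk' N) := by
    intro x y hxy
    apply hinj2
    simp only [MonoidHom.comp_apply, hxy]
  have hfix : ∀ x, Φ x = x := by
    intro x
    apply hinjmk
    have := DFunLike.congr_fun hcomp x
    simpa using this
  exact ⟨⟨fun a b hab => by rwa [hfix, hfix] at hab, fun x => ⟨x, hfix x⟩⟩, hcomp⟩
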